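/- There is a constant c > 0 such that for every field K, every ε ∈ (0, 1/2), and every n ∈ ℕ, there is a multilinear polynomial p ∈ K[x₁,…,xₙ,y₁,…,yₙ] with at most 2^{n − c·ε²·n} monomials such that for all x,y ∈ {0,1}^n with 2εn ≤ ⟨x,y⟩ ≤ (1/2 + ε)n, one has p(x,y) = (−1)^{⟨x,y⟩} (the sign interpreted as an element of K). -/

import Mathlib

open scoped Classical
open Finset

noncomputable section

def ip {n : ℕ} (x y : Fin n → Bool) : ℕ :=
  (Finset.univ.filter (fun i => x i ∧ y i)).card

def wt {n : ℕ} (x : Fin n → Bool) : ℕ :=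
  (Finset.univ.filter (fun i => x i)).card

def Had (K : Type) [Field K] (n : ℕ) : Matrix (Fin n → Bool) (Fin n → Bool) K :=
  Matrix.of fun x y => (-1 : K) ^ ip x y

def diffCount {n : ℕ} {K : Type} [Field K]
    (A B : Matrix (Fin n → Bool) (Fin n → Bool) K) : ℕ :=
  Nat.card {p : (Fin n → Bool) × (Fin n → Bool) // A p.1 p.2 ≠ B p.1 p.2}

def ProbRankLE {n : ℕ} {K : Type} [Field K]
    (A : Matrix (Fin n → Bool) (Fin n → Bool) K) (ε r : ℝ) : Prop :=
  ∃ (s : Finset (Matrix (Fin n → Bool) (Fin n → Bool) K))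
    (w : Matrix (Fin n → Bool) (Fin n → Bool) K → ℝ),
    (∀ M ∈ s, 0 ≤ w M) ∧ (∑ M ∈ s, w M) = 1 ∧
    (∀ M ∈ s, ((M.rank : ℝ)) ≤ r) ∧
    ∀ x y : Fin n → Bool, 1 - ε ≤ ∑ M ∈ s, (if M x y = A x y then w M else 0)


theorem interp (K : Type) [Field K] (L d : ℕ) (f : ℕ → K) :
    ∃ a : ℕ → K, ∀ i ≤ d, ∑ k ∈ Finset.range (d+1), a k * ((L+i).choose k : K) = f (L+i) := by
  classical
  set B : Matrix (Fin (d+1)) (Fin (d+1)) K := fun i t => ((i:ℕ).choose (t:ℕ) : K) with hB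
  set U : Matrix (Fin (d+1)) (Fin (d+1)) K :=
    fun t k => if (t:ℕ) ≤ (k:ℕ) then (L.choose ((k:ℕ) - (t:ℕ)) : K) else 0 with hU
  set M : Matrix (Fin (d+1)) (Fin (d+1)) K := fun i k => ((L + (i:ℕ)).choose (k:ℕ) : K) with hM
  have hfact : M = B * U := by
    ext i k
    show ((L + (i:ℕ)).choose (k:ℕ) : K) = ∑ t : Fin (d+1), B i t * U t k
    have key : ((i:ℕ) + L).choose (k:ℕ) = ∑ t ∈ Finset.range ((k:ℕ)+1), (i:ℕ).choose t * L.choose ((k:ℕ) - t) := by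
      rw [Nat.add_choose_eq, Finset.Nat.sum_antidiagonal_eq_sum_range_succ_mk]
    have hsub : Finset.range ((k:ℕ)+1) ⊆ Finset.range (d+1) :=
      Finset.range_subset_range.2 (by omega)
    calc ((L + (i:ℕ)).choose (k:ℕ) : K)
        = ∑ t ∈ Finset.range ((k:ℕ)+1), ((i:ℕ).choose t * L.choose ((k:ℕ) - t) : K) := by
          rw [Nat.add_comm L]; rw_mod_cast [key]
      _ = ∑ t ∈ Finset.range ((k:ℕ)+1), (if t ≤ (k:ℕ) then ((i:ℕ).choose t * L.choose ((k:ℕ) - t) : K) else 0) := by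
          refine Finset.sum_congr rfl fun t ht => ?_
          rw [if_pos (by simpa [Nat.lt_succ_iff] using ht)]
      _ = ∑ t ∈ Finset.range (d+1), (if t ≤ (k:ℕ) then ((i:ℕ).choose t * L.choose ((k:ℕ) - t) : K) else 0) := by
          refine Finset.sum_subset hsub fun t _ ht => ?_
          rw [if_neg (by simpa [Nat.lt_succ_iff] using ht)]
      _ = ∑ t : Fin (d+1), B i t * U t k := by
          rw [← Fin.sum_univ_eq_sum_range (fun t => if t ≤ (k:ℕ) then ((i:ℕ).choose t * L.choose ((k:ℕ) - t) : K) else 0)]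
          refine Finset.sum_congr rfl fun t _ => ?_
          simp only [hB, hU]
          split <;> ring
  have hBdet : B.det = 1 := by
    rw [Matrix.det_of_lowerTriangular B (fun i j h => by
      simp only [OrderDual.toDual_lt_toDual] at h
      show ((i:ℕ).choose (j:ℕ) : K) = 0
      rw [Nat.choose_eq_zero_of_lt (by exact_mod_cast h), Nat.cast_zero])]
    simp [hB]
  have hUdet : U.det = 1 := by
    rw [Matrix.det_of_upperTriangular (show U.BlockTriangular id from fun t k h => by
      show (if (t:ℕ) ≤ (k:ℕ) then (L.choose ((k:ℕ) - (t:ℕ)) : K) else 0) = 0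
      rw [if_neg (by exact_mod_cast Nat.not_le.2 h)])]
    simp [hU]
  have hMdet : IsUnit M.det := by
    rw [hfact, Matrix.det_mul, hBdet, hUdet, one_mul]; exact isUnit_one
  set v : Fin (d+1) → K := fun i => f (L + (i:ℕ)) with hv
  set a0 : Fin (d+1) → K := M⁻¹.mulVec v with ha0
  have hMa : M.mulVec a0 = v := by
    rw [ha0, Matrix.mulVec_mulVec, Matrix.mul_nonsing_inv M hMdet, Matrix.one_mulVec]
  refine ⟨fun k => if h : k < d+1 then a0 ⟨k, h⟩ else 0, fun i hi => ?_⟩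
  have := congrFun hMa ⟨i, by omega⟩
  rw [Matrix.mulVec, dotProduct] at this
  calc ∑ k ∈ Finset.range (d+1), (if h : k < d+1 then a0 ⟨k, h⟩ else 0) * ((L+i).choose k : K)
      = ∑ k : Fin (d+1), M ⟨i, by omega⟩ k * a0 k := by
        rw [← Fin.sum_univ_eq_sum_range (fun k => (if h : k < d+1 then a0 ⟨k, h⟩ else 0) * ((L+i).choose k : K))]
        refine Finset.sum_congr rfl fun k _ => ?_
        rw [dif_pos k.isLt]
        show a0 ⟨(k:ℕ), k.isLt⟩ * ((L+i).choose (k:ℕ) : K) = ((L + i).choose (k:ℕ) : K) * a0 k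
        rw [mul_comm]
    _ = f (L + i) := this


lemma chernoff (n d : ℕ) (ε : ℝ) (hε0 : 0 < ε) (hε : ε < 1/2)
    (hd : (d:ℝ) ≤ (1/2 - ε) * n) :
    (∑ k ∈ Finset.range (d+1), (n.choose k : ℝ)) ≤ 2^n * Real.exp (-2*ε^2*n) := by
  set t : ℝ := 4*ε with ht
  have ht0 : 0 < t := by positivity
  set lam : ℝ := Real.exp (-t) with hlam
  have hlam0 : 0 < lam := Real.exp_pos _
  have hlam1 : lam ≤ 1 := Real.exp_le_one_iff.2 (by linarith)
  -- Step 1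
  have step1 : (∑ k ∈ Finset.range (d+1), (n.choose k : ℝ)) * lam^d ≤ (1+lam)^n := by
    rw [Finset.sum_mul]
    calc ∑ k ∈ Finset.range (d+1), (n.choose k : ℝ) * lam^d
        ≤ ∑ k ∈ Finset.range (d+1), (n.choose k : ℝ) * lam^k := by
          refine Finset.sum_le_sum fun k hk => ?_
          have : lam^d ≤ lam^k :=
            pow_le_pow_of_le_one hlam0.le hlam1 (by simpa [Nat.lt_succ_iff] using hk)
          exact mul_le_mul_of_nonneg_left this (by positivity)
      _ ≤ ∑ k ∈ Finset.range (d+n+1), (n.choose k : ℝ) * lam^k := by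
          refine Finset.sum_le_sum_of_subset_of_nonneg
            (Finset.range_subset_range.2 (by omega)) fun k _ _ => by positivity
      _ = ∑ k ∈ Finset.range (n+1), (n.choose k : ℝ) * lam^k := by
          refine (Finset.sum_subset (Finset.range_subset_range.2 (by omega)) fun k _ hk => ?_).symm
          rw [Nat.choose_eq_zero_of_lt (by simpa [Nat.lt_succ_iff] using hk)]
          simp
      _ = (lam + 1)^n := by
          rw [add_pow]
          refine Finset.sum_congr rfl fun k _ => ?_
          ring
      _ = (1 + lam)^n := by ring
  -- Step 2
  have hexp : Real.exp (-(t * ((1/2 - ε) * n))) ≤ lam^d := by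
    rw [hlam, ← Real.exp_nat_mul]
    apply Real.exp_le_exp.2
    have : t * (d:ℝ) ≤ t * ((1/2 - ε) * n) := mul_le_mul_of_nonneg_left hd ht0.le
    nlinarith
  have step2 : (∑ k ∈ Finset.range (d+1), (n.choose k : ℝ))
      ≤ (1+lam)^n * Real.exp (t * ((1/2 - ε) * n)) := by
    have hS0 : (0:ℝ) ≤ ∑ k ∈ Finset.range (d+1), (n.choose k : ℝ) := by positivity
    have h1 : (∑ k ∈ Finset.range (d+1), (n.choose k : ℝ)) * Real.exp (-(t * ((1/2 - ε) * n)))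
        ≤ (1+lam)^n := le_trans (mul_le_mul_of_nonneg_left hexp hS0) step1
    have h2 := mul_le_mul_of_nonneg_right h1 (Real.exp_pos (t * ((1/2 - ε) * n))).le
    rwa [mul_assoc, ← Real.exp_add, neg_add_cancel, Real.exp_zero, mul_one] at h2
  -- Step 3
  have hcosh : 1 + lam = 2 * Real.exp (-t/2) * Real.cosh (t/2) := by
    have h : 2 * Real.exp (-t/2) * ((Real.exp (t/2) + Real.exp (-(t/2)))/2)
        = Real.exp (-t/2 + t/2) + Real.exp (-t/2 + -(t/2)) := by
      rw [Real.exp_add, Real.exp_add, show -(t/2) = -t/2 by ring]; ring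
    rw [Real.cosh_eq, h, show -t/2 + t/2 = (0:ℝ) by ring, show -t/2 + -(t/2) = -t by ring,
      Real.exp_zero, hlam]
  have step3 : (1+lam)^n ≤ 2^n * Real.exp ((n:ℝ) * (-t/2 + t^2/8)) := by
    have hb : 1 + lam ≤ 2 * Real.exp (-t/2 + t^2/8) := by
      rw [hcosh, Real.exp_add, ← mul_assoc]
      have h1 : Real.cosh (t/2) ≤ Real.exp ((t/2)^2/2) := Real.cosh_le_exp_half_sq _
      have h2 : (t/2)^2/2 = t^2/8 := by ring
      rw [h2] at h1
      have : (0:ℝ) ≤ 2 * Real.exp (-t/2) := by positivity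
      nlinarith [Real.exp_pos (t^2/8)]
    calc (1+lam)^n ≤ (2 * Real.exp (-t/2 + t^2/8))^n :=
          pow_le_pow_left₀ (by positivity) hb n
      _ = 2^n * Real.exp ((n:ℝ) * (-t/2 + t^2/8)) := by
          rw [mul_pow, ← Real.exp_nat_mul]
  -- combine
  calc (∑ k ∈ Finset.range (d+1), (n.choose k : ℝ))
      ≤ (1+lam)^n * Real.exp (t * ((1/2 - ε) * n)) := step2
    _ ≤ 2^n * Real.exp ((n:ℝ) * (-t/2 + t^2/8)) * Real.exp (t * ((1/2 - ε) * n)) :=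
        mul_le_mul_of_nonneg_right step3 (Real.exp_pos _).le
    _ = 2^n * Real.exp (-2*ε^2*n) := by
        rw [mul_assoc, ← Real.exp_add]
        congr 2
        rw [ht]
        ring

def mSg {n : ℕ} (i : Fin n) : (Fin n ⊕ Fin n) →₀ ℕ :=
  Finsupp.single (Sum.inl i) 1 + Finsupp.single (Sum.inr i) 1

def mS {n : ℕ} (S : Finset (Fin n)) : (Fin n ⊕ Fin n) →₀ ℕ := ∑ i ∈ S, mSg i

lemma mS_apply_le {n : ℕ} (S : Finset (Fin n)) (v : Fin n ⊕ Fin n) : mS S v ≤ 1 := by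
  classical
  have : ∀ j : Fin n, (∑ i ∈ S, mSg i v) = ∑ i ∈ S, (if i = j then 1 else 0) → mS S v ≤ 1 := by
    intro j h
    rw [mS, Finsupp.finset_sum_apply, h, Finset.sum_ite_eq' S j (fun _ => 1)]
    split <;> simp
  rcases v with j | j
  · refine this j (Finset.sum_congr rfl fun i _ => ?_)
    simp [mSg, Finsupp.single_apply]
  · refine this j (Finset.sum_congr rfl fun i _ => ?_)
    simp [mSg, Finsupp.single_apply]

lemma monomial_mS (K : Type) [Field K] {n : ℕ} (S : Finset (Fin n)) :
    MvPolynomial.monomial (mS S) (1:K) =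
      ∏ i ∈ S, (MvPolynomial.X (Sum.inl i) * MvPolynomial.X (Sum.inr i)) := by
  classical
  induction S using Finset.induction_on with
  | empty => simp [mS]
  | insert j S' hnotmem ih =>
    rw [Finset.prod_insert hnotmem, ← ih]
    rw [show mS (insert j S') = mSg j + mS S' by rw [mS, mS, Finset.sum_insert hnotmem]]
    rw [MvPolynomial.X, MvPolynomial.X, MvPolynomial.monomial_mul, MvPolynomial.monomial_mul]
    simp [mSg]

lemma construct (K : Type) [Field K] (n d : ℕ) (a : ℕ → K) :
    ∃ p : MvPolynomial (Fin n ⊕ Fin n) K,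
      (∀ m ∈ p.support, ∀ v, m v ≤ 1) ∧
      (p.support.card ≤ ∑ k ∈ Finset.range (d+1), n.choose k) ∧
      ∀ x y : Fin n → Bool,
        MvPolynomial.eval (Sum.elim (fun i => if x i then (1:K) else 0)
            (fun i => if y i then (1:K) else 0)) p
          = ∑ k ∈ Finset.range (d+1), a k * ((ip x y).choose k : K) := by
  classical
  refine ⟨∑ k ∈ Finset.range (d+1), ∑ S ∈ Finset.powersetCard k Finset.univ,
      MvPolynomial.monomial (mS S) (a k), ?_, ?_, ?_⟩
  · intro m hm v
    have h1 := MvPolynomial.support_sum hm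
    rw [Finset.mem_biUnion] at h1
    obtain ⟨k, -, hk⟩ := h1
    have h2 := MvPolynomial.support_sum hk
    rw [Finset.mem_biUnion] at h2
    obtain ⟨S, -, hS⟩ := h2
    rw [MvPolynomial.support_monomial] at hS
    have : m = mS S := by
      by_cases h : a k = 0
      · rw [if_pos h] at hS; simp at hS
      · rw [if_neg h] at hS; simpa using hS
    rw [this]; exact mS_apply_le S v
  · calc (MvPolynomial.support _).card
        ≤ ((Finset.range (d+1)).biUnion fun k =>
            MvPolynomial.support (∑ S ∈ Finset.powersetCard k Finset.univ,
              MvPolynomial.monomial (mS S) (a k))).card :=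
          Finset.card_le_card MvPolynomial.support_sum
      _ ≤ ∑ k ∈ Finset.range (d+1), (MvPolynomial.support (∑ S ∈ Finset.powersetCard k Finset.univ,
              MvPolynomial.monomial (mS S) (a k))).card := Finset.card_biUnion_le
      _ ≤ ∑ k ∈ Finset.range (d+1), n.choose k := by
          refine Finset.sum_le_sum fun k _ => ?_
          calc (MvPolynomial.support _).card
              ≤ ((Finset.powersetCard k (Finset.univ : Finset (Fin n))).biUnion fun S =>
                  MvPolynomial.support (MvPolynomial.monomial (mS S) (a k))).card :=
                Finset.card_le_card MvPolynomial.support_sum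
            _ ≤ ∑ S ∈ Finset.powersetCard k (Finset.univ : Finset (Fin n)),
                  (MvPolynomial.support (MvPolynomial.monomial (mS S) (a k))).card :=
                Finset.card_biUnion_le
            _ ≤ ∑ S ∈ Finset.powersetCard k (Finset.univ : Finset (Fin n)), 1 := by
                refine Finset.sum_le_sum fun S _ => ?_
                rw [MvPolynomial.support_monomial]
                split <;> simp
            _ = n.choose k := by
                rw [Finset.sum_const, smul_eq_mul, mul_one, Finset.card_powersetCard,
                  Finset.card_univ, Fintype.card_fin]
  · intro x y
    set v : Fin n ⊕ Fin n → K := Sum.elim (fun i => if x i then (1:K) else 0)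
      (fun i => if y i then (1:K) else 0) with hv
    set T : Finset (Fin n) := Finset.univ.filter (fun i => x i ∧ y i) with hT
    have hprod : ∀ S : Finset (Fin n),
        MvPolynomial.eval v (MvPolynomial.monomial (mS S) (1:K))
          = if S ⊆ T then (1:K) else 0 := by
      intro S
      rw [monomial_mS, map_prod]
      by_cases h : S ⊆ T
      · rw [if_pos h]
        refine Finset.prod_eq_one fun i hi => ?_
        have := h hi
        rw [hT, Finset.mem_filter] at this
        simp [hv, this.2.1, this.2.2]
      · rw [if_neg h]
        obtain ⟨i, hiS, hiT⟩ := Finset.not_subset.1 h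
        refine Finset.prod_eq_zero hiS ?_
        rw [hT] at hiT
        simp only [Finset.mem_filter, Finset.mem_univ, true_and, not_and] at hiT
        by_cases hx : x i
        · simp [hv, hx, hiT hx]
        · simp [hv, hx]
    rw [map_sum]
    refine Finset.sum_congr rfl fun k _ => ?_
    rw [map_sum]
    have hTcard : T.card = ip x y := rfl
    calc ∑ S ∈ Finset.powersetCard k Finset.univ,
          MvPolynomial.eval v (MvPolynomial.monomial (mS S) (a k))
        = ∑ S ∈ Finset.powersetCard k (Finset.univ : Finset (Fin n)),
            a k * (if S ⊆ T then (1:K) else 0) := by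
          refine Finset.sum_congr rfl fun S _ => ?_
          rw [show (MvPolynomial.monomial (mS S)) (a k)
              = MvPolynomial.C (a k) * MvPolynomial.monomial (mS S) 1 by
            rw [MvPolynomial.C_mul_monomial, mul_one], map_mul, MvPolynomial.eval_C, hprod]
      _ = a k * ∑ S ∈ Finset.powersetCard k (Finset.univ : Finset (Fin n)),
            (if S ⊆ T then (1:K) else 0) := by rw [Finset.mul_sum]
      _ = a k * ((ip x y).choose k : K) := by
          rw [Finset.sum_boole]
          congr 2
          rw [show (Finset.powersetCard k (Finset.univ : Finset (Fin n))).filter (· ⊆ T)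
              = Finset.powersetCard k T by
            ext S
            simp [Finset.mem_powersetCard, Finset.mem_filter, and_comm]]
          rw [Finset.card_powersetCard, hTcard]


/-- Lemma 3.1 (IP2-polynomial): a sparse multilinear polynomial computing
    (-1)^{⟨x,y⟩} on all Boolean points with inner product in the middle range. -/
theorem sparse_multilinear_for_IP2 :
    ∃ c : ℝ, 0 < c ∧
      ∀ (K : Type) [Field K], ∀ ε : ℝ, 0 < ε → ε < 1 / 2 → ∀ n : ℕ,
        ∃ p : MvPolynomial (Fin n ⊕ Fin n) K,
          (∀ m ∈ p.support, ∀ v, m v ≤ 1) ∧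
          (p.support.card : ℝ) ≤ 2 ^ ((n : ℝ) - c * ε ^ 2 * n) ∧
          ∀ x y : Fin n → Bool,
            2 * ε * n ≤ (ip x y : ℝ) → (ip x y : ℝ) ≤ (1 / 2 + ε) * n →
            MvPolynomial.eval
              (Sum.elim (fun i => if x i then (1 : K) else 0)
                        (fun i => if y i then (1 : K) else 0)) p
              = (-1 : K) ^ ip x y := by
  classical
  refine ⟨1, one_pos, fun K _ ε hε0 hε n => ?_⟩
  set L : ℕ := ⌈2*ε*(n:ℝ)⌉₊ with hL
  set Hi : ℕ := ⌊(1/2+ε)*(n:ℝ)⌋₊ with hHi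
  set d : ℕ := Hi - L with hd
  obtain ⟨a, ha⟩ := interp K L d (fun m => (-1:K)^m)
  obtain ⟨p, hp1, hp2, hp3⟩ := construct K n d a
  have hdle : (d:ℝ) ≤ (1/2 - ε) * n := by
    by_cases h : L ≤ Hi
    · have h1 : (Hi:ℝ) ≤ (1/2+ε)*n := Nat.floor_le (by positivity)
      have h2 : 2*ε*(n:ℝ) ≤ L := Nat.le_ceil _
      have h3 : (d:ℝ) = (Hi:ℝ) - L := by
        rw [hd, Nat.cast_sub h]
      rw [h3]; linarith
    · have : d = 0 := by rw [hd]; omega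
      rw [this, Nat.cast_zero]
      have : (0:ℝ) ≤ n := Nat.cast_nonneg n
      nlinarith
  refine ⟨p, hp1, ?_, ?_⟩
  · calc (p.support.card : ℝ)
        ≤ ∑ k ∈ Finset.range (d+1), (n.choose k : ℝ) := by
          exact_mod_cast Nat.cast_le.2 hp2
      _ ≤ 2^n * Real.exp (-2*ε^2*n) := chernoff n d ε hε0 hε hdle
      _ ≤ 2 ^ ((n : ℝ) - 1 * ε ^ 2 * n) := by
          rw [show (n:ℝ) - 1*ε^2*n = (n:ℝ) + (-(ε^2*n)) by ring,
            Real.rpow_add (by norm_num), Real.rpow_natCast,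
            Real.rpow_def_of_pos (by norm_num : (0:ℝ) < 2)]
          refine mul_le_mul_of_nonneg_left ?_ (by positivity)
          rw [Real.exp_le_exp]
          have hlog : Real.log 2 ≤ 1 := by
            have := Real.log_le_sub_one_of_pos (by norm_num : (0:ℝ) < 2)
            linarith
          have hlog0 : 0 ≤ Real.log 2 := Real.log_nonneg (by norm_num)
          have hεn : (0:ℝ) ≤ ε^2 * n := by positivity
          nlinarith
  · intro x y hlo hhi
    have hLm : L ≤ ip x y := Nat.ceil_le.2 hlo
    have hmHi : ip x y ≤ Hi := Nat.le_floor hhi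
    have hi : ip x y - L ≤ d := by omega
    have hLi : L + (ip x y - L) = ip x y := by omega
    rw [hp3]
    have := ha (ip x y - L) hi
    rw [hLi] at this
    exact this
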